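/- The minimal size of a blocking set in dimension 2 is h(2) = 3. -/
import Mathlib


/-- Two cube centers in `{0,1,2,3}^d` (modeled as `(ZMod 4)^d`) overlap iff
no coordinate differs by exactly 2 modulo 4. -/
def Overlap {d : ℕ} (x y : Fin d → ZMod 4) : Prop := ∀ i, x i - y i ≠ 2

/-- A cube packing: pairwise non-overlapping centers. -/
def IsPacking {d : ℕ} (P : Finset (Fin d → ZMod 4)) : Prop :=
  ∀ x ∈ P, ∀ y ∈ P, x ≠ y → ¬ Overlap x y

/-- Non-extendible cube packing: no vector outside can be added. -/
def IsNonExtendible {d : ℕ} (P : Finset (Fin d → ZMod 4)) : Prop :=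
  IsPacking P ∧ ∀ v : Fin d → ZMod 4, v ∉ P → ∃ x ∈ P, Overlap v x

/-- Blocking set: every vector overlaps some element of `S`. -/
def IsBlocking {d : ℕ} (S : Finset (Fin d → ZMod 4)) : Prop :=
  ∀ v : Fin d → ZMod 4, ∃ s ∈ S, Overlap v s

/-- `f d`: minimal number of cubes in a non-extendible cube packing. -/
noncomputable def f (d : ℕ) : ℕ :=
  sInf {n | ∃ P : Finset (Fin d → ZMod 4), IsNonExtendible P ∧ P.card = n}

/-- `h d`: minimal size of a blocking set. -/
noncomputable def hBlock (d : ℕ) : ℕ :=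
  sInf {n | ∃ S : Finset (Fin d → ZMod 4), IsBlocking S ∧ S.card = n}

/-- No set contained in a pair `{s, t}` is blocking in dimension 2. -/
lemma not_blocking_of_subset_pair (S : Finset (Fin 2 → ZMod 4))
    (s t : Fin 2 → ZMod 4) (hsub : ∀ x ∈ S, x = s ∨ x = t) :
    ¬ IsBlocking S := by
  intro hS
  obtain ⟨x, hx, hov⟩ := hS ![s 0 + 2, t 1 + 2]
  rcases hsub x hx with rfl | rfl
  · exact hov 0 (by simp)
  · exact hov 1 (by simp)

theorem hBlock_two : hBlock 2 = 3 := by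
  have hmem : (3:ℕ) ∈ {n | ∃ S : Finset (Fin 2 → ZMod 4), IsBlocking S ∧ S.card = n} := by
    refine ⟨{![0,0], ![1,2], ![2,1]}, ?_, by decide⟩
    unfold IsBlocking Overlap
    decide
  refine le_antisymm (Nat.sInf_le hmem) (le_csInf ⟨3, hmem⟩ ?_)
  rintro n ⟨S, hS, rfl⟩
  by_contra h
  push_neg at h
  interval_cases hc : S.card
  · rw [Finset.card_eq_zero] at hc
    subst hc
    exact absurd hS (not_blocking_of_subset_pair _ 0 0 (by simp))
  · rw [Finset.card_eq_one] at hc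
    obtain ⟨a, rfl⟩ := hc
    exact absurd hS (not_blocking_of_subset_pair _ a a (by simp))
  · rw [Finset.card_eq_two] at hc
    obtain ⟨a, b, -, rfl⟩ := hc
    refine absurd hS (not_blocking_of_subset_pair _ a b ?_)
    simp [Finset.mem_insert]
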